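/- The triple product L on O(1;n) satisfies the first J-ternary axiom: for all x, y, u, v, w ∈ O(1;n), L_{x,y}(L_{u,v}w) − L_{u,v}(L_{x,y}w) = L_{(L_{x,y}u), v}(w) + L_{u, (L_{y,x}v)}(w). Equivalently, as operators on O: [L_{x,y}, L_{u,v}] = L_{(L_{x,y}u), v} + L_{u, (L_{y,x}v)}. -/

import Mathlib

/-- The product of the divided power algebra `O(1;n)`, written in coordinates with
respect to the basis `e_0, …, e_{3^n - 1}`: it is the bilinear product determined by
`e_i · e_j = binom(i+j, i) e_{i+j}`, where `e_k = 0` for `k ≥ 3^n`. -/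
def omul (Φ : Type*) [Field Φ] (n : ℕ) (f g : Fin (3 ^ n) → Φ) : Fin (3 ^ n) → Φ :=
  fun k => ∑ i : Fin (3 ^ n), ∑ j : Fin (3 ^ n),
    if (i : ℕ) + (j : ℕ) = (k : ℕ)
    then (((i : ℕ) + (j : ℕ)).choose (i : ℕ) : Φ) * f i * g j
    else 0

/-- The basis element `e_i` of `O(1;n)`. -/
def eb (Φ : Type*) [Field Φ] (n : ℕ) (i : Fin (3 ^ n)) : Fin (3 ^ n) → Φ :=
  Pi.single i 1

/-- The linear map `∂` on `O(1;n)`, with `∂ e_0 = 0` and `∂ e_i = e_{i-1}`;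
in coordinates, `(∂ f)_k = f_{k+1}` (interpreted as `0` when `k + 1 ≥ 3^n`). -/
def odel (Φ : Type*) [Field Φ] (n : ℕ) (f : Fin (3 ^ n) → Φ) : Fin (3 ^ n) → Φ :=
  fun k => if h : (k : ℕ) + 1 < 3 ^ n then f ⟨(k : ℕ) + 1, h⟩ else 0

/-- The triple product `L_{f,g}h = f·g·∂(h) − h·g·∂(f)` on `O(1;n)`. -/
def Lt (Φ : Type*) [Field Φ] (n : ℕ) (f g h : Fin (3 ^ n) → Φ) : Fin (3 ^ n) → Φ :=
  omul Φ n (omul Φ n f g) (odel Φ n h) - omul Φ n (omul Φ n h g) (odel Φ n f)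


open Finset

namespace JTaux

/-- Sequences with binomial (Hurwitz) convolution. -/
structure Hur (Φ : Type*) where
  c : ℕ → Φ

namespace Hur

variable {Φ : Type*} [Field Φ]

theorem hext {a b : Hur Φ} (h : ∀ k, a.c k = b.c k) : a = b := by
  cases a; cases b; simp only [mk.injEq]; funext k; exact h k

instance : Zero (Hur Φ) := ⟨⟨fun _ => 0⟩⟩
instance : One (Hur Φ) := ⟨⟨fun k => if k = 0 then 1 else 0⟩⟩
instance : Add (Hur Φ) := ⟨fun a b => ⟨fun k => a.c k + b.c k⟩⟩
instance : Neg (Hur Φ) := ⟨fun a => ⟨fun k => -(a.c k)⟩⟩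
instance : Mul (Hur Φ) :=
  ⟨fun a b => ⟨fun k => ∑ i ∈ range (k + 1), (k.choose i : Φ) * a.c i * b.c (k - i)⟩⟩

@[simp] theorem zero_c (k : ℕ) : (0 : Hur Φ).c k = 0 := rfl
@[simp] theorem add_c (a b : Hur Φ) (k : ℕ) : (a + b).c k = a.c k + b.c k := rfl
@[simp] theorem neg_c (a : Hur Φ) (k : ℕ) : (-a).c k = -(a.c k) := rfl
@[simp] theorem one_c (k : ℕ) : (1 : Hur Φ).c k = if k = 0 then 1 else 0 := rfl
theorem mul_c (a b : Hur Φ) (k : ℕ) :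
    (a * b).c k = ∑ i ∈ range (k + 1), (k.choose i : Φ) * a.c i * b.c (k - i) := rfl

theorem mul_comm' (a b : Hur Φ) : a * b = b * a := by
  apply hext; intro k
  rw [mul_c, mul_c, ← Finset.sum_range_reflect]
  apply Finset.sum_congr rfl
  intro i hi
  rw [mem_range] at hi
  have hik : i ≤ k := by omega
  have h1 : k + 1 - 1 - i = k - i := by omega
  rw [h1, Nat.sub_sub_self hik, Nat.choose_symm hik]
  ring

theorem mul_assoc' (a b c : Hur Φ) : a * b * c = a * (b * c) := by
  apply hext; intro k
  simp only [mul_c, Finset.sum_mul, Finset.mul_sum]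
  rw [Finset.sum_comm' (t' := range (k + 1)) (s' := fun p => Finset.Ico p (k + 1))
    (by intro j p; simp only [mem_range, Finset.mem_Ico]; omega)]
  apply Finset.sum_congr rfl
  intro p hp
  rw [mem_range] at hp
  have hpk : p ≤ k := by omega
  rw [Finset.sum_Ico_eq_sum_range]
  have hkp : k + 1 - p = k - p + 1 := by omega
  rw [hkp]
  apply Finset.sum_congr rfl
  intro q hq
  rw [mem_range] at hq
  have hqk : q ≤ k - p := by omega
  have hcast : (k.choose (p + q) : Φ) * ((p + q).choose p : Φ) =
      (k.choose p : Φ) * ((k - p).choose q : Φ) := by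
    rw [← Nat.cast_mul, ← Nat.cast_mul, Nat.choose_mul (by omega),
      Nat.add_sub_cancel_left]
  have h1 : p + q - p = q := by omega
  have h2 : k - (p + q) = k - p - q := by omega
  rw [h1, h2]
  calc (k.choose (p + q) : Φ) * (((p + q).choose p : Φ) * a.c p * b.c q) * c.c (k - p - q)
      = ((k.choose (p + q) : Φ) * ((p + q).choose p : Φ)) *
          (a.c p * b.c q * c.c (k - p - q)) := by ring
    _ = ((k.choose p : Φ) * ((k - p).choose q : Φ)) *
          (a.c p * b.c q * c.c (k - p - q)) := by rw [hcast]
    _ = (k.choose p : Φ) * a.c p *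
          (((k - p).choose q : Φ) * b.c q * c.c (k - p - q)) := by ring

theorem one_mul' (a : Hur Φ) : 1 * a = a := by
  apply hext; intro k
  rw [mul_c]
  rw [Finset.sum_eq_single 0]
  · simp
  · intro i _ hi
    simp [hi]
  · intro h
    simp at h

instance : CommRing (Hur Φ) where
  add_assoc a b c := by apply hext; intro k; simp [add_assoc]
  zero_add a := by apply hext; intro k; simp
  add_zero a := by apply hext; intro k; simp
  add_comm a b := by apply hext; intro k; simp [add_comm]
  neg_add_cancel a := by apply hext; intro k; simp
  mul_assoc := mul_assoc'
  mul_comm := mul_comm'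
  one_mul := one_mul'
  mul_one a := by rw [mul_comm', one_mul']
  left_distrib a b c := by
    apply hext; intro k
    simp only [mul_c, add_c, ← Finset.sum_add_distrib]
    apply Finset.sum_congr rfl; intros; ring
  right_distrib a b c := by
    apply hext; intro k
    simp only [mul_c, add_c, ← Finset.sum_add_distrib]
    apply Finset.sum_congr rfl; intros; ring
  zero_mul a := by apply hext; intro k; simp [mul_c]
  mul_zero a := by apply hext; intro k; simp [mul_c]
  nsmul := nsmulRec
  zsmul := zsmulRec

@[simp] theorem sub_c (a b : Hur Φ) (k : ℕ) : (a - b).c k = a.c k - b.c k := by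
  rw [sub_eq_add_neg, add_c, neg_c, sub_eq_add_neg]

/-- The shift derivation. -/
def D (a : Hur Φ) : Hur Φ := ⟨fun k => a.c (k + 1)⟩

@[simp] theorem D_c (a : Hur Φ) (k : ℕ) : (D a).c k = a.c (k + 1) := rfl

theorem D_sub (a b : Hur Φ) : D (a - b) = D a - D b := by
  apply hext; intro k; simp

theorem D_mul (a b : Hur Φ) : D (a * b) = D a * b + a * D b := by
  apply hext; intro k
  simp only [D_c, add_c, mul_c]
  rw [Finset.sum_range_succ' (fun i => ((k+1).choose i : Φ) * a.c i * b.c (k + 1 - i))]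
  have step : ∀ i ∈ range (k + 1),
      ((k+1).choose (i+1) : Φ) * a.c (i+1) * b.c (k + 1 - (i+1)) =
        (k.choose i : Φ) * a.c (i+1) * b.c (k - i) +
        (k.choose (i+1) : Φ) * a.c (i+1) * b.c (k - i) := by
    intro i hi
    have h1 : k + 1 - (i + 1) = k - i := by omega
    rw [h1, Nat.choose_succ_succ, Nat.cast_add]
    ring
  rw [Finset.sum_congr rfl step, Finset.sum_add_distrib]
  have hlast : ∑ i ∈ range (k + 1), (k.choose (i+1) : Φ) * a.c (i+1) * b.c (k - i) =
      ∑ i ∈ range k, (k.choose (i+1) : Φ) * a.c (i+1) * b.c (k - i) := by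
    rw [Finset.sum_range_succ]
    simp [Nat.choose_succ_self]
  have hrhs : ∑ i ∈ range (k + 1), (k.choose i : Φ) * a.c i * b.c (k - i + 1) =
      (∑ i ∈ range k, (k.choose (i+1) : Φ) * a.c (i+1) * b.c (k - i)) +
        a.c 0 * b.c (k + 1) := by
    rw [Finset.sum_range_succ' (fun i => (k.choose i : Φ) * a.c i * b.c (k - i + 1))]
    simp only [Nat.choose_zero_right, Nat.cast_one, one_mul, Nat.sub_zero]
    congr 1
    apply Finset.sum_congr rfl
    intro i hi
    rw [mem_range] at hi
    have : k - (i + 1) + 1 = k - i := by omega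
    rw [this]
  rw [hlast, hrhs]
  simp only [Nat.choose_zero_right, Nat.cast_one, one_mul, Nat.sub_zero]
  ring

/-- The abstract J-ternary triple product. -/
def LtH (x y h : Hur Φ) : Hur Φ := x * y * D h - h * y * D x

theorem LtH_main (x y u v w : Hur Φ) :
    LtH x y (LtH u v w) - LtH u v (LtH x y w) =
      LtH (LtH x y u) v w + LtH u (LtH y x v) w := by
  simp only [LtH, D_sub, D_mul]
  ring


theorem three_dvd_choose :
    ∀ (n i j : ℕ), i < 3 ^ n → j < 3 ^ n → 3 ^ n ≤ i + j → 3 ∣ (i + j).choose i := by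
  intro n
  induction n with
  | zero => intro i j hi hj h; omega
  | succ n ih =>
    intro i j hi hj h
    haveI : Fact (Nat.Prime 3) := ⟨by norm_num⟩
    have lucas := Choose.choose_modEq_choose_mod_mul_choose_div_nat
      (n := i + j) (k := i) (p := 3)
    rw [Nat.pow_succ] at hi hj h
    have key : 3 ∣ ((i + j) % 3).choose (i % 3) * ((i + j) / 3).choose (i / 3) := by
      rcases lt_or_ge ((i + j) % 3) (i % 3) with hc | hc
      · rw [Nat.choose_eq_zero_of_lt hc, zero_mul]
        exact dvd_zero 3
      · have hdiv : (i + j) / 3 = i / 3 + j / 3 := by omega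
        have h1 : i / 3 < 3 ^ n := by omega
        have h2 : j / 3 < 3 ^ n := by omega
        have h3 : 3 ^ n ≤ i / 3 + j / 3 := by omega
        have := ih (i / 3) (j / 3) h1 h2 h3
        rw [hdiv]
        exact Dvd.dvd.mul_left this _
    have h0 : (i + j).choose i ≡ 0 [MOD 3] :=
      lucas.trans (Nat.modEq_zero_iff_dvd.mpr key)
    exact Nat.modEq_zero_iff_dvd.mp h0

variable {Φ : Type*} [Field Φ]

/-- The embedding of `O(1;n)` into the Hurwitz ring, extending by zero. -/
def toH (n : ℕ) (f : Fin (3 ^ n) → Φ) : Hur Φ :=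
  ⟨fun k => if h : k < 3 ^ n then f ⟨k, h⟩ else 0⟩

theorem toH_c_fin (n : ℕ) (f : Fin (3 ^ n) → Φ) (i : Fin (3 ^ n)) :
    (toH n f).c (i : ℕ) = f i := by
  simp [toH, i.isLt]

theorem toH_inj {n : ℕ} {f g : Fin (3 ^ n) → Φ} (h : toH n f = toH n g) : f = g := by
  funext i
  have := congrFun (congrArg Hur.c h) i.val
  simpa [toH, i.isLt] using this

theorem toH_sub (n : ℕ) (f g : Fin (3 ^ n) → Φ) : toH n (f - g) = toH n f - toH n g := by
  apply hext; intro k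
  simp only [sub_c, toH]
  split
  · simp
  · simp

theorem toH_add (n : ℕ) (f g : Fin (3 ^ n) → Φ) : toH n (f + g) = toH n f + toH n g := by
  apply hext; intro k
  simp only [add_c, toH]
  split
  · simp
  · simp

theorem toH_odel (n : ℕ) (f : Fin (3 ^ n) → Φ) : toH n (odel Φ n f) = D (toH n f) := by
  apply hext; intro k
  simp only [toH, D_c, odel]
  by_cases hk : k < 3 ^ n
  · rw [dif_pos hk]
  · rw [dif_neg hk, dif_neg (by omega)]

theorem toH_omul [CharP Φ 3] (n : ℕ) (f g : Fin (3 ^ n) → Φ) :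
    toH n (omul Φ n f g) = toH n f * toH n g := by
  apply hext; intro k
  rw [mul_c]
  by_cases hk : k < 3 ^ n
  · have hl : (toH n (omul Φ n f g)).c k = omul Φ n f g ⟨k, hk⟩ := dif_pos hk
    rw [hl, omul]
    have hbody : ∀ i j : Fin (3 ^ n),
        (if (i : ℕ) + (j : ℕ) = (k : ℕ)
          then (((i : ℕ) + (j : ℕ)).choose (i : ℕ) : Φ) * f i * g j else 0) =
        (if (i : ℕ) + (j : ℕ) = k
          then (((i : ℕ) + (j : ℕ)).choose (i : ℕ) : Φ) *
            (toH n f).c (i : ℕ) * (toH n g).c (j : ℕ) else 0) := by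
      intro i j
      rw [toH_c_fin, toH_c_fin]
    simp only [hbody]
    rw [Fin.sum_univ_eq_sum_range (fun i => ∑ j : Fin (3 ^ n),
      if i + (j : ℕ) = k then ((i + (j : ℕ)).choose i : Φ) *
        (toH n f).c i * (toH n g).c (j : ℕ) else 0)]
    have hinner : ∀ i : ℕ, (∑ j : Fin (3 ^ n),
        if i + (j : ℕ) = k then ((i + (j : ℕ)).choose i : Φ) *
          (toH n f).c i * (toH n g).c (j : ℕ) else 0) =
        ∑ j ∈ range (3 ^ n), if i + j = k then ((i + j).choose i : Φ) *
          (toH n f).c i * (toH n g).c j else 0 := by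
      intro i
      exact Fin.sum_univ_eq_sum_range
        (fun j => if i + j = k then ((i + j).choose i : Φ) *
          (toH n f).c i * (toH n g).c j else 0) _
    simp only [hinner]
    rw [← Finset.sum_subset (Finset.range_subset_range.mpr (by omega : k + 1 ≤ 3 ^ n))
      (by
        intro i _ hi
        rw [mem_range] at hi
        apply Finset.sum_eq_zero
        intro j _
        rw [if_neg (by omega)])]
    have hrow : ∀ i ∈ range (k + 1),
        (∑ j ∈ range (3 ^ n), if i + j = k then ((i + j).choose i : Φ) *
          (toH n f).c i * (toH n g).c j else 0) =
        (k.choose i : Φ) * (toH n f).c i * (toH n g).c (k - i) := by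
      intro i hi
      rw [mem_range] at hi
      rw [Finset.sum_eq_single (k - i)]
      · rw [if_pos (by omega)]
        have hik : i + (k - i) = k := by omega
        rw [hik]
      · intro j _ hj
        rw [if_neg (by omega)]
      · intro hni
        exfalso
        rw [mem_range] at hni
        omega
    exact Finset.sum_congr rfl hrow
  · have hl : (toH n (omul Φ n f g)).c k = 0 := dif_neg hk
    rw [hl]
    symm
    apply Finset.sum_eq_zero
    intro i hi
    rw [mem_range] at hi
    by_cases hif : i < 3 ^ n
    · by_cases hjg : k - i < 3 ^ n
      · have hdvd : (3 : ℕ) ∣ k.choose i := by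
          have := three_dvd_choose n i (k - i) hif hjg (by omega)
          have hki : i + (k - i) = k := by omega
          rwa [hki] at this
        have : (k.choose i : Φ) = 0 := (CharP.cast_eq_zero_iff Φ 3 _).mpr hdvd
        rw [this, zero_mul, zero_mul]
      · have : (toH n g).c (k - i) = 0 := dif_neg hjg
        rw [this, mul_zero]
    · have : (toH n f).c i = 0 := dif_neg hif
      rw [this, mul_zero, zero_mul]

theorem toH_Lt [CharP Φ 3] (n : ℕ) (f g h : Fin (3 ^ n) → Φ) :
    toH n (Lt Φ n f g h) = LtH (toH n f) (toH n g) (toH n h) := by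
  rw [Lt, LtH, toH_sub, toH_omul, toH_omul, toH_omul, toH_omul, toH_odel, toH_odel]

end Hur

end JTaux

/-- The triple product `L` on `O(1;n)` satisfies the first J-ternary axiom:
`[L_{x,y}, L_{u,v}] = L_{L_{x,y}u, v} + L_{u, L_{y,x}v}` as operators on `O(1;n)`. -/
theorem Jternary_first_axiom (Φ : Type*) [Field Φ] [CharP Φ 3] (n : ℕ) (hn : 1 ≤ n) :
    ∀ x y u v w : Fin (3 ^ n) → Φ,
      Lt Φ n x y (Lt Φ n u v w) - Lt Φ n u v (Lt Φ n x y w) =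
        Lt Φ n (Lt Φ n x y u) v w + Lt Φ n u (Lt Φ n y x v) w := by
  intro x y u v w
  apply JTaux.Hur.toH_inj (Φ := Φ) (n := n)
  rw [JTaux.Hur.toH_sub, JTaux.Hur.toH_add]
  simp only [JTaux.Hur.toH_Lt]
  exact JTaux.Hur.LtH_main _ _ _ _ _
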